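/- Let T be a discourse tree over m EDUs with m ≥ 2. Consider the stack-based decoding procedure that initializes a stack with the span (0,m) and repeatedly: pops a span (i,j) from the stack, looks up the unique triple (i,k,j) ∈ S_edu(T) with outer span (i,j), pushes (k,j) onto the stack if j − k > 1, and then pushes (i,k) onto the stack if k − i > 1. This procedure terminates after exactly m − 1 iterations, during which each internal-node span of T is popped exactly once and the set of triples looked up is exactly S_edu(T). -/
import Mathlib


/-- A discourse tree over the EDU interval `(i, j)`: a full binary tree whose
nodes are labeled by intervals, leaves are labeled `(i, i+1)`, and every
internal node labeled `(i, j)` has two children labeled `(i, k)` and `(k, j)`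
for some `i < k < j`.  A discourse tree over `m` EDUs is a `DTree 0 m`. -/
inductive DTree : ℕ → ℕ → Type
  | leaf (i : ℕ) : DTree i (i + 1)
  | node {i k j : ℕ} : DTree i k → DTree k j → DTree i j

/-- The splitting-decision set `S_edu(T)`. -/
def DTree.splits : {i j : ℕ} → DTree i j → Finset (ℕ × ℕ × ℕ)
  | _, _, DTree.leaf _ => ∅
  | _, _, @DTree.node i k j l r => insert (i, k, j) (l.splits ∪ r.splits)

/-- The set of spans labeling the internal nodes of the tree. -/
def DTree.internalSpans : {i j : ℕ} → DTree i j → Finset (ℕ × ℕ)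
  | _, _, DTree.leaf _ => ∅
  | _, _, @DTree.node i _ j l r => insert (i, j) (l.internalSpans ∪ r.internalSpans)

/-- One iteration of the stack-based decoding procedure, where `f` performs
the lookup of the split point of a span.  The state is a pair of the stack of
spans and the list of triples looked up so far.  The procedure pops a span
`(i, j)` from the stack, looks up the split point `k = f (i, j)` (recording
the triple `(i, k, j)`), pushes `(k, j)` onto the stack if `j − k > 1`, and
then pushes `(i, k)` onto the stack if `k − i > 1`.  On an empty stack it does
nothing. -/
def decodeStep (f : ℕ × ℕ → ℕ) :
    List (ℕ × ℕ) × List (ℕ × ℕ × ℕ) → List (ℕ × ℕ) × List (ℕ × ℕ × ℕ)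
  | ([], acc) => ([], acc)
  | ((i, j) :: st, acc) =>
      let k := f (i, j)
      let st1 := if 1 < j - k then (k, j) :: st else st
      let st2 := if 1 < k - i then (i, k) :: st1 else st1
      (st2, (i, k, j) :: acc)

-- preorder traversal of split triples
def DTree.trav : {i j : ℕ} → DTree i j → List (ℕ × ℕ × ℕ)
  | _, _, DTree.leaf _ => []
  | _, _, @DTree.node i k j l r => (i, k, j) :: (l.trav ++ r.trav)

lemma DTree.lt : ∀ {i j : ℕ}, DTree i j → i < j
  | _, _, DTree.leaf i => Nat.lt_succ_self i
  | _, _, DTree.node l r => l.lt.trans r.lt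

lemma DTree.trav_length : ∀ {i j : ℕ} (T : DTree i j), T.trav.length = j - i - 1
  | _, _, DTree.leaf i => by simp [DTree.trav]
  | _, _, @DTree.node i k j l r => by
    have hl := l.lt; have hr := r.lt
    simp [DTree.trav, l.trav_length, r.trav_length]
    omega

lemma DTree.trav_toFinset : ∀ {i j : ℕ} (T : DTree i j), T.trav.toFinset = T.splits
  | _, _, DTree.leaf i => by simp [DTree.trav, DTree.splits]
  | _, _, @DTree.node i k j l r => by
    simp [DTree.trav, DTree.splits, l.trav_toFinset, r.trav_toFinset]

lemma DTree.trav_spans_toFinset : ∀ {i j : ℕ} (T : DTree i j),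
    (T.trav.map (fun x => (x.1, x.2.2))).toFinset = T.internalSpans
  | _, _, DTree.leaf i => by simp [DTree.trav, DTree.internalSpans]
  | _, _, @DTree.node i k j l r => by
    simp [DTree.trav, DTree.internalSpans, l.trav_spans_toFinset, r.trav_spans_toFinset]

lemma DTree.trav_bounds : ∀ {i j : ℕ} (T : DTree i j) (a b c : ℕ),
    (a, b, c) ∈ T.trav → i ≤ a ∧ a < b ∧ b < c ∧ c ≤ j
  | _, _, DTree.leaf i, a, b, c => by simp [DTree.trav]
  | _, _, @DTree.node i k j l r, a, b, c => by
    intro h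
    have hl := l.lt; have hr := r.lt
    simp [DTree.trav] at h
    rcases h with ⟨h1, h2, h3⟩ | h | h
    · omega
    · have := l.trav_bounds a b c h; omega
    · have := r.trav_bounds a b c h; omega

lemma DTree.trav_spans_nodup : ∀ {i j : ℕ} (T : DTree i j),
    (T.trav.map (fun x => (x.1, x.2.2))).Nodup
  | _, _, DTree.leaf i => by simp [DTree.trav]
  | _, _, @DTree.node i k j l r => by
    have hl := l.lt; have hr := r.lt
    simp only [DTree.trav, List.map_cons, List.map_append, List.nodup_cons]
    constructor
    · intro h
      rcases List.mem_append.1 h with h | h <;>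
      · obtain ⟨⟨a, b, c⟩, hm, he⟩ := List.mem_map.1 h
        simp at he
        first
          | (have := l.trav_bounds a b c hm; omega)
          | (have := r.trav_bounds a b c hm; omega)
    · refine List.Nodup.append l.trav_spans_nodup r.trav_spans_nodup ?_
      rintro ⟨pa, pc⟩ hp hq
      obtain ⟨⟨a, b, c⟩, hm, he⟩ := List.mem_map.1 hp
      obtain ⟨⟨a', b', c'⟩, hm', he'⟩ := List.mem_map.1 hq
      have h1 := l.trav_bounds a b c hm
      have h2 := r.trav_bounds a' b' c' hm'
      simp only [Prod.mk.injEq] at he he'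
      omega

def pushC (i j : ℕ) (st : List (ℕ × ℕ)) : List (ℕ × ℕ) :=
  if 1 < j - i then (i, j) :: st else st

lemma decode_main : ∀ {i j : ℕ} (T : DTree i j) (f : ℕ × ℕ → ℕ)
    (hf : ∀ a b c : ℕ, (a, b, c) ∈ T.splits → f (a, c) = b)
    (st : List (ℕ × ℕ)) (acc : List (ℕ × ℕ × ℕ)),
    (decodeStep f)^[T.trav.length] (pushC i j st, acc) = (st, T.trav.reverse ++ acc)
  | _, _, DTree.leaf i, f, hf, st, acc => by
    simp [DTree.trav, pushC]
  | _, _, @DTree.node i k j l r, f, hf, st, acc => by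
    have hl := l.lt; have hr := r.lt
    have hfl : ∀ a b c : ℕ, (a, b, c) ∈ l.splits → f (a, c) = b := fun a b c h =>
      hf a b c (by simp [DTree.splits, h])
    have hfr : ∀ a b c : ℕ, (a, b, c) ∈ r.splits → f (a, c) = b := fun a b c h =>
      hf a b c (by simp [DTree.splits, h])
    have hk : f (i, j) = k := hf i k j (by simp [DTree.splits])
    have hstep : decodeStep f ((i, j) :: st, acc) =
        (pushC i k (pushC k j st), (i, k, j) :: acc) := by
      simp [decodeStep, hk, pushC]
    have hpush : pushC i j st = (i, j) :: st := by
      unfold pushC; rw [if_pos (by omega)]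
    calc (decodeStep f)^[(DTree.node l r).trav.length] (pushC i j st, acc)
        = (decodeStep f)^[r.trav.length] ((decodeStep f)^[l.trav.length]
            ((decodeStep f) ((i, j) :: st, acc))) := by
          rw [hpush]
          have hlen2 : (DTree.node l r).trav.length =
              r.trav.length + (l.trav.length + 1) := by
            simp [DTree.trav]; omega
          rw [hlen2, Function.iterate_add_apply, Function.iterate_succ_apply]
      _ = (st, (DTree.node l r).trav.reverse ++ acc) := by
          rw [hstep, decode_main l f hfl, decode_main r f hfr]
          simp [DTree.trav]

/-- Let `T` be a discourse tree over `m` EDUs (`m ≥ 2`), and let `f` be the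
lookup function returning, for each internal-node span `(i, j)` of `T`, the
unique `k` with `(i, k, j) ∈ S_edu(T)`.  Then the stack-based decoding
procedure started from the stack `[(0, m)]`: (1) has a nonempty stack at every
iteration before the `(m−1)`-st, (2) terminates with an empty stack after
exactly `m − 1` iterations, having looked up a list `L` of `m − 1` triples in
which each internal-node span of `T` occurs as an outer span exactly once
(the popped spans are exactly the internal-node spans of `T`, each popped
once), and the set of triples looked up is exactly `S_edu(T)`. -/
theorem stack_decoding_correct (m : ℕ) (hm : 2 ≤ m) (T : DTree 0 m)
    (f : ℕ × ℕ → ℕ) (hf : ∀ i k j : ℕ, (i, k, j) ∈ T.splits → f (i, j) = k) :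
    (∀ t : ℕ, t < m - 1 → ((decodeStep f)^[t] ([(0, m)], [])).1 ≠ []) ∧
    ∃ L : List (ℕ × ℕ × ℕ),
      (decodeStep f)^[m - 1] ([(0, m)], []) = ([], L) ∧
      L.length = m - 1 ∧
      (L.map (fun x => (x.1, x.2.2))).Nodup ∧
      (L.map (fun x => (x.1, x.2.2))).toFinset = T.internalSpans ∧
      L.toFinset = T.splits := by
  have hlen : T.trav.length = m - 1 := by rw [T.trav_length]; omega
  have hmain := decode_main T f hf [] []
  rw [hlen] at hmain
  have hpush : pushC 0 m [] = [(0, m)] := by unfold pushC; rw [if_pos (by omega)]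
  rw [hpush] at hmain
  -- accumulator length bound
  have hacc : ∀ (t : ℕ) (s : List (ℕ × ℕ) × List (ℕ × ℕ × ℕ)),
      ((decodeStep f)^[t] s).2.length ≤ t + s.2.length := by
    intro t
    induction t with
    | zero => intro s; simp
    | succ n ih =>
      intro s
      rw [Function.iterate_succ_apply]
      refine le_trans (ih _) ?_
      rcases s with ⟨st, acc⟩
      rcases st with _ | ⟨⟨a, b⟩, st⟩ <;> simp [decodeStep] <;> omega
  constructor
  · intro t ht hempty
    have hfix : (decodeStep f)^[m - 1] ([(0, m)], ([] : List (ℕ × ℕ × ℕ))) =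
        (decodeStep f)^[t] ([(0, m)], []) := by
      have : m - 1 = (m - 1 - t) + t := by omega
      rw [this, Function.iterate_add_apply]
      set s := (decodeStep f)^[t] ([(0, m)], ([] : List (ℕ × ℕ × ℕ)))
      have hse : s = ([], s.2) := Prod.ext hempty rfl
      rw [hse, Function.iterate_fixed (by simp [decodeStep])]
    have h2 := hacc t ([(0, m)], [])
    have h3 : ((decodeStep f)^[t] ([(0, m)], ([] : List (ℕ × ℕ × ℕ)))).2.length
        = m - 1 := by
      rw [← hfix, hmain]; simp [hlen]
    simp only [List.length_nil] at h2
    omega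
  · refine ⟨T.trav.reverse ++ [], hmain, by simp [hlen], ?_, ?_, ?_⟩
    · simpa using (List.nodup_reverse.2 T.trav_spans_nodup : _)
    · simp [← T.trav_spans_toFinset]
    · simp [← T.trav_toFinset]
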